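/- Let Ω ⊂ ℂⁿ be a domain, φ ∈ C¹(Ω) real-valued, and g = (g₁,…,g_m) holomorphic on Ω with |g(z)|² := Σ_k |g_k(z)|² > 0 everywhere. Let ω = (ω_{kν})_{1≤k≤m, 1≤ν≤n} with each ω_{kν} ∈ C¹(Ω), and assume Σ_{k=1}^m g_k(z) ω_{kν}(z) = 0 for all z ∈ Ω and all ν. Define (T*_φω)_k := Σ_ν (ω_{kν} ∂φ/∂z_ν − ∂ω_{kν}/∂z_ν) and Φ_gω := ( Σ_{k,ν} ∂(g_k/|g|²)/∂z_ν · ω_{kν} ) · (ḡ₁,…,ḡ_m). Then for every z ∈ Ω: (i) Σ_{k=1}^m g_k(z) ((T*_φω)_k(z) − (Φ_gω)_k(z)) = 0; (ii) Φ_gω(z) is orthogonal, with respect to the standard Hermitian inner product on ℂ^m, to every u ∈ ℂ^m with Σ_k g_k(z) u_k = 0. Consequently T*_φω(z) − Φ_gω(z) is the orthogonal projection of T*_φω(z) onto the subspace {u ∈ ℂ^m : Σ_k g_k(z) u_k = 0}. -/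

import Mathlib

open MeasureTheory Filter Complex Set Bornology ENNReal

noncomputable section

/-- ℂⁿ with the Euclidean metric. -/
abbrev Cn (n : ℕ) : Type := EuclideanSpace ℂ (Fin n)


instance {n : ℕ} : MeasurableSpace (Cn n) := borel _
instance {n : ℕ} : BorelSpace (Cn n) := ⟨rfl⟩
instance {n : ℕ} : MeasureSpace (Cn n) :=
  letI : InnerProductSpace ℝ (Cn n) := InnerProductSpace.complexToReal
  measureSpaceOfInnerProductSpace

/-- The `j`-th standard basis vector of ℂⁿ. -/
def sdir {n : ℕ} (j : Fin n) : Cn n := EuclideanSpace.single j 1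

/-- Wirtinger derivative `∂f/∂z_j`. -/
def wder {n : ℕ} (j : Fin n) (f : Cn n → ℂ) (z : Cn n) : ℂ :=
  (fderiv ℝ f z (sdir j) - Complex.I * fderiv ℝ f z (Complex.I • sdir j)) / 2

/-- Conjugate Wirtinger derivative `∂f/∂z̄_j`. -/
def wbar {n : ℕ} (j : Fin n) (f : Cn n → ℂ) (z : Cn n) : ℂ :=
  (fderiv ℝ f z (sdir j) + Complex.I * fderiv ℝ f z (Complex.I • sdir j)) / 2

/-- Complex Hessian `∂²f/∂z_j∂z̄_k`. -/
def hessC {n : ℕ} (j k : Fin n) (f : Cn n → ℂ) (z : Cn n) : ℂ :=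
  wder j (fun w => wbar k f w) z

/-- Levi form `Σ_{j,k} (∂²φ/∂z_j∂z̄_k) ξ_j ξ̄_k` of a real-valued function. -/
def levi {n : ℕ} (φ : Cn n → ℝ) (z : Cn n) (ξ : Fin n → ℂ) : ℝ :=
  (∑ j, ∑ k, hessC j k (fun w => (φ w : ℂ)) z * ξ j * (starRingEnd ℂ) (ξ k)).re

/-- Euclidean Laplacian on ℂⁿ ≅ ℝ^{2n}. -/
def lap {n : ℕ} (φ : Cn n → ℝ) (z : Cn n) : ℝ :=
  ∑ j, (fderiv ℝ (fun w => fderiv ℝ φ w (sdir j)) z (sdir j)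
    + fderiv ℝ (fun w => fderiv ℝ φ w (Complex.I • sdir j)) z (Complex.I • sdir j))

/-- Squared norm of the real gradient `|∇φ|²`. -/
def gradSq {n : ℕ} (φ : Cn n → ℝ) (z : Cn n) : ℝ :=
  ∑ j, ((fderiv ℝ φ z (sdir j)) ^ 2 + (fderiv ℝ φ z (Complex.I • sdir j)) ^ 2)

/-- `ρ` is a `C²` defining function for the bounded open set `Ω ⊂ ℂⁿ`:
`ρ` is real-valued and `C²` on a neighborhood `U` of the closure of `Ω`,
`Ω = {ρ < 0}`, and `∇ρ ≠ 0` on `∂Ω`. -/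
structure IsDefining {n : ℕ} (Ω : Set (Cn n)) (ρ : Cn n → ℝ) : Prop where
  isOpen : IsOpen Ω
  bounded : IsBounded Ω
  exU : ∃ U : Set (Cn n), IsOpen U ∧ closure Ω ⊆ U ∧ ContDiffOn ℝ 2 ρ U ∧
    Ω = {z | z ∈ U ∧ ρ z < 0}
  grad_ne : ∀ z ∈ frontier Ω, fderiv ℝ ρ z ≠ 0

/-- Squared Hardy norm `‖f‖²_{H²(Ω)} = limsup_{ε→0⁺} ∫_{∂Ω_ε} |f|² dσ_ε`,
where `∂Ω_ε` carries the `(2n-1)`-dimensional Hausdorff measure. -/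
def hardySq {n : ℕ} (Ω : Set (Cn n)) (ρ : Cn n → ℝ) (f : Cn n → ℂ) : ℝ≥0∞ :=
  Filter.limsup
    (fun ε : ℝ =>
      ∫⁻ z in frontier {w | w ∈ Ω ∧ ρ w < -ε}, ENNReal.ofReal (‖f z‖ ^ 2)
        ∂ μH[2 * (n : ℝ) - 1])
    (nhdsWithin 0 (Set.Ioi 0))

/-- `f` belongs to the Hardy space `H²(Ω)`. -/
def MemHardy {n : ℕ} (Ω : Set (Cn n)) (ρ : Cn n → ℝ) (f : Cn n → ℂ) : Prop :=
  DifferentiableOn ℂ f Ω ∧ hardySq Ω ρ f < ⊤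

/-- The subdomain `Ω_ε = {z ∈ Ω : ρ(z) < -ε}`. -/
def subdom {n : ℕ} (Ω : Set (Cn n)) (ρ : Cn n → ℝ) (ε : ℝ) : Set (Cn n) :=
  {w | w ∈ Ω ∧ ρ w < -ε}

/-- The `k`-th component of `T*_φω`, namely `Σ_ν (ω_{kν} ∂φ/∂z_ν - ∂ω_{kν}/∂z_ν)`. -/
def TstarComp {n m : ℕ} (φ : Cn n → ℝ) (ω : Fin m → Fin n → Cn n → ℂ)
    (k : Fin m) (z : Cn n) : ℂ :=
  ∑ ν, (ω k ν z * wder ν (fun w => (φ w : ℂ)) z - wder ν (ω k ν) z)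

/-- The `k`-th component of `Φ_gω = (Σ_{i,ν} ∂(g_i/|g|²)/∂z_ν ⋅ ω_{iν}) ⋅ ḡ`. -/
def PhiComp {n m : ℕ} (g : Fin m → Cn n → ℂ) (ω : Fin m → Fin n → Cn n → ℂ)
    (k : Fin m) (z : Cn n) : ℂ :=
  (∑ i, ∑ ν, wder ν (fun w => g i w / ((∑ l, ‖g l w‖ ^ 2 : ℝ) : ℂ)) z * ω i ν z)
    * (starRingEnd ℂ) (g k z)

lemma wder_congr {n : ℕ} (ν : Fin n) {f h : Cn n → ℂ} {z : Cn n}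
    (hfh : f =ᶠ[nhds z] h) : wder ν f z = wder ν h z := by
  unfold wder; rw [Filter.EventuallyEq.fderiv_eq hfh]

lemma wder_const {n : ℕ} (ν : Fin n) (c : ℂ) (z : Cn n) :
    wder ν (fun _ => c) z = 0 := by
  unfold wder; simp

lemma wder_mul {n : ℕ} (ν : Fin n) {f h : Cn n → ℂ} {z : Cn n}
    (hf : DifferentiableAt ℝ f z) (hh : DifferentiableAt ℝ h z) :
    wder ν (fun w => f w * h w) z = wder ν f z * h z + f z * wder ν h z := by
  unfold wder
  rw [fderiv_fun_mul hf hh]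
  simp only [ContinuousLinearMap.add_apply, ContinuousLinearMap.smul_apply, smul_eq_mul]
  ring

lemma wder_sum {n : ℕ} (ν : Fin n) {ι : Type*} (s : Finset ι) {f : ι → Cn n → ℂ} {z : Cn n}
    (hf : ∀ i ∈ s, DifferentiableAt ℝ (f i) z) :
    wder ν (fun w => ∑ i ∈ s, f i w) z = ∑ i ∈ s, wder ν (f i) z := by
  unfold wder
  rw [fderiv_fun_sum hf]
  simp only [ContinuousLinearMap.sum_apply]
  rw [Finset.mul_sum, ← Finset.sum_sub_distrib, ← Finset.sum_div]

/-- **Ohsawa's lemma** (Lemma 4.1, pointwise form). If `g ⋅ ω = 0`, then at each `z ∈ Ω`: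
(i) `g ⋅ (T*_φω - Φ_gω) = 0`; (ii) `Φ_gω ⊥ {u : g ⋅ u = 0}`; consequently
`T*_φω - Φ_gω` is the orthogonal projection of `T*_φω` onto `{u : g ⋅ u = 0}`,
i.e. it minimizes the distance from `T*_φω` to that subspace. -/
theorem ohsawa_projection {n m : ℕ} (Ω : Set (Cn n)) (hΩ : IsOpen Ω) (hconn : IsConnected Ω)
    (φ : Cn n → ℝ) (hφ : ContDiffOn ℝ 1 φ Ω)
    (g : Fin m → Cn n → ℂ) (hg : ∀ k, DifferentiableOn ℂ (g k) Ω)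
    (hpos : ∀ z ∈ Ω, 0 < ∑ k, ‖g k z‖ ^ 2)
    (ω : Fin m → Fin n → Cn n → ℂ) (hω : ∀ k ν, ContDiffOn ℝ 1 (ω k ν) Ω)
    (hker : ∀ z ∈ Ω, ∀ ν : Fin n, ∑ k, g k z * ω k ν z = 0)
    (z : Cn n) (hz : z ∈ Ω) :
    (∑ k, g k z * (TstarComp φ ω k z - PhiComp g ω k z) = 0) ∧
    (∀ u : Fin m → ℂ, (∑ k, g k z * u k) = 0 →
      ∑ k, PhiComp g ω k z * (starRingEnd ℂ) (u k) = 0) ∧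
    (∀ u : Fin m → ℂ, (∑ k, g k z * u k) = 0 →
      ∑ k, ‖TstarComp φ ω k z - (TstarComp φ ω k z - PhiComp g ω k z)‖ ^ 2
        ≤ ∑ k, ‖TstarComp φ ω k z - u k‖ ^ 2) := by
  have hzn : Ω ∈ nhds z := hΩ.mem_nhds hz
  have hgd : ∀ k, DifferentiableAt ℝ (g k) z := fun k =>
    (((hg k).differentiableAt hzn).restrictScalars ℝ)
  have hωd : ∀ k ν, DifferentiableAt ℝ (ω k ν) z := fun k ν =>
    ((hω k ν).differentiableOn one_ne_zero).differentiableAt hzn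
  -- the squared norm function, as a complex-valued function
  set q : Cn n → ℂ := fun w => ((∑ l, ‖g l w‖ ^ 2 : ℝ) : ℂ) with hq_def
  have hq_eq : ∀ w, q w = ∑ l, g l w * (starRingEnd ℂ) (g l w) := by
    intro w
    rw [hq_def]
    push_cast
    refine Finset.sum_congr rfl fun l _ => ?_
    rw [Complex.mul_conj]; norm_cast
    rw [Complex.normSq_eq_norm_sq]
  have hqz_ne : q z ≠ 0 := by
    show ((∑ l, ‖g l z‖ ^ 2 : ℝ) : ℂ) ≠ 0
    exact_mod_cast (hpos z hz).ne'
  have hqd : DifferentiableAt ℝ q z := by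
    have : q = fun w => ∑ l, g l w * (starRingEnd ℂ) (g l w) := funext hq_eq
    rw [this]
    exact DifferentiableAt.fun_sum fun l _ => (hgd l).mul (hgd l).star
  have hq' : DifferentiableAt ℝ (fun w => (q w)⁻¹) z := hqd.inv hqz_ne
  -- differentiate the kernel relation
  have key : ∀ ν, ∑ k, (wder ν (g k) z * ω k ν z + g k z * wder ν (ω k ν) z) = 0 := by
    intro ν
    have h0 : (fun w => ∑ k, g k w * ω k ν w) =ᶠ[nhds z] (fun _ => (0 : ℂ)) :=
      Filter.eventuallyEq_of_mem hzn (fun w hw => hker w hw ν)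
    have h1 := wder_congr ν h0
    rw [wder_const, wder_sum ν Finset.univ (f := fun k w => g k w * ω k ν w) (fun k _ => (hgd k).mul (hωd k ν))] at h1
    rw [← h1]
    exact Finset.sum_congr rfl fun k _ => (wder_mul ν (hgd k) (hωd k ν)).symm
  -- the scalar S and Wirtinger derivatives of g_i / |g|²
  have hwq : ∀ i ν, wder ν (fun w => g i w / ((∑ l, ‖g l w‖ ^ 2 : ℝ) : ℂ)) z
      = wder ν (g i) z * (q z)⁻¹ + g i z * wder ν (fun w => (q w)⁻¹) z := by
    intro i ν
    have hfun : (fun w => g i w / ((∑ l, ‖g l w‖ ^ 2 : ℝ) : ℂ)) = fun w => g i w * (q w)⁻¹ := by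
      funext w; rw [hq_def, div_eq_mul_inv]
    rw [hfun, wder_mul ν (hgd i) hq']
  set S : ℂ := ∑ i, ∑ ν, wder ν (fun w => g i w / ((∑ l, ‖g l w‖ ^ 2 : ℝ) : ℂ)) z * ω i ν z
    with hS_def
  set A : ℂ := ∑ ν, ∑ k, wder ν (g k) z * ω k ν z with hA_def
  have hPhi : ∀ k, PhiComp g ω k z = S * (starRingEnd ℂ) (g k z) := fun k => rfl
  have hSq : S * q z = A := by
    have hS2 : S = A * (q z)⁻¹ := by
      rw [hS_def, hA_def, Finset.sum_comm]
      rw [Finset.sum_mul]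
      refine Finset.sum_congr rfl fun ν _ => ?_
      rw [Finset.sum_mul]
      calc ∑ i, wder ν (fun w => g i w / ((∑ l, ‖g l w‖ ^ 2 : ℝ) : ℂ)) z * ω i ν z
          = ∑ i, (wder ν (g i) z * ω i ν z * (q z)⁻¹
              + wder ν (fun w => (q w)⁻¹) z * (g i z * ω i ν z)) := by
            refine Finset.sum_congr rfl fun i _ => ?_
            rw [hwq i ν]; ring
        _ = ∑ i, wder ν (g i) z * ω i ν z * (q z)⁻¹
              + wder ν (fun w => (q w)⁻¹) z * ∑ i, g i z * ω i ν z := by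
            rw [Finset.sum_add_distrib, Finset.mul_sum]
        _ = ∑ i, wder ν (g i) z * ω i ν z * (q z)⁻¹ := by
            rw [hker z hz ν, mul_zero, add_zero]
    rw [hS2, mul_assoc, inv_mul_cancel₀ hqz_ne, mul_one]
  -- part (i)
  have hgconj : ∑ k, g k z * (starRingEnd ℂ) (g k z) = q z := (hq_eq z).symm
  have part1 : ∑ k, g k z * (TstarComp φ ω k z - PhiComp g ω k z) = 0 := by
    have hT : ∑ k, g k z * TstarComp φ ω k z = A := by
      rw [hA_def]
      simp only [TstarComp, Finset.mul_sum]
      rw [Finset.sum_comm]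
      refine Finset.sum_congr rfl fun ν _ => ?_
      have h2 := key ν
      rw [Finset.sum_add_distrib] at h2
      calc ∑ k, g k z * (ω k ν z * wder ν (fun w => (φ w : ℂ)) z - wder ν (ω k ν) z)
          = (∑ k, g k z * ω k ν z) * wder ν (fun w => (φ w : ℂ)) z
            - ∑ k, g k z * wder ν (ω k ν) z := by
            rw [Finset.sum_mul, ← Finset.sum_sub_distrib]
            exact Finset.sum_congr rfl fun k _ => by ring
        _ = ∑ k, wder ν (g k) z * ω k ν z := by
            rw [hker z hz ν, zero_mul, zero_sub]
            linear_combination -h2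
    have hP : ∑ k, g k z * PhiComp g ω k z = A := by
      calc ∑ k, g k z * PhiComp g ω k z
          = S * ∑ k, g k z * (starRingEnd ℂ) (g k z) := by
            rw [Finset.mul_sum]
            exact Finset.sum_congr rfl fun k _ => by rw [hPhi k]; ring
        _ = A := by rw [hgconj, hSq]
    calc ∑ k, g k z * (TstarComp φ ω k z - PhiComp g ω k z)
        = (∑ k, g k z * TstarComp φ ω k z) - ∑ k, g k z * PhiComp g ω k z := by
          rw [← Finset.sum_sub_distrib]
          exact Finset.sum_congr rfl fun k _ => by ring
      _ = 0 := by rw [hT, hP, sub_self]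
  -- part (ii)
  have part2 : ∀ u : Fin m → ℂ, (∑ k, g k z * u k) = 0 →
      ∑ k, PhiComp g ω k z * (starRingEnd ℂ) (u k) = 0 := by
    intro u hu
    calc ∑ k, PhiComp g ω k z * (starRingEnd ℂ) (u k)
        = S * (starRingEnd ℂ) (∑ k, g k z * u k) := by
          rw [map_sum, Finset.mul_sum]
          exact Finset.sum_congr rfl fun k _ => by rw [hPhi k, map_mul]; ring
      _ = 0 := by rw [hu, map_zero, mul_zero]
  refine ⟨part1, part2, ?_⟩
  -- part (iii)
  intro u hu
  set a : Fin m → ℂ := fun k => TstarComp φ ω k z with ha_def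
  set P : Fin m → ℂ := fun k => PhiComp g ω k z with hP_def
  set d : Fin m → ℂ := fun k => (a k - P k) - u k with hd_def
  have hdker : ∑ k, g k z * d k = 0 := by
    have : ∑ k, g k z * d k = (∑ k, g k z * (a k - P k)) - ∑ k, g k z * u k := by
      rw [← Finset.sum_sub_distrib]
      exact Finset.sum_congr rfl fun k _ => by rw [hd_def]; ring
    rw [this, part1, hu, sub_zero]
  have horth : (∑ k, P k * (starRingEnd ℂ) (d k)).re = 0 := by
    rw [part2 d hdker]; rfl
  have expand : ∀ k, ‖a k - u k‖ ^ 2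
      = ‖P k‖ ^ 2 + ‖d k‖ ^ 2 + 2 * (P k * (starRingEnd ℂ) (d k)).re := by
    intro k
    have h1 : a k - u k = P k + d k := by rw [hd_def]; ring
    have h2 : ∀ x : ℂ, ‖x‖ ^ 2 = Complex.normSq x := fun x => by
      rw [Complex.normSq_eq_norm_sq]
    rw [h1, h2, h2, h2, Complex.normSq_add]
  have : ∑ k, ‖a k - u k‖ ^ 2 = ∑ k, ‖P k‖ ^ 2 + ∑ k, ‖d k‖ ^ 2 := by
    calc ∑ k, ‖a k - u k‖ ^ 2
        = ∑ k, (‖P k‖ ^ 2 + ‖d k‖ ^ 2 + 2 * (P k * (starRingEnd ℂ) (d k)).re) :=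
          Finset.sum_congr rfl fun k _ => expand k
      _ = ∑ k, ‖P k‖ ^ 2 + ∑ k, ‖d k‖ ^ 2
            + 2 * (∑ k, P k * (starRingEnd ℂ) (d k)).re := by
          rw [Finset.sum_add_distrib, Finset.sum_add_distrib, Complex.re_sum,
            Finset.mul_sum]
      _ = ∑ k, ‖P k‖ ^ 2 + ∑ k, ‖d k‖ ^ 2 := by rw [horth, mul_zero, add_zero]
  have hle : ∑ k, ‖P k‖ ^ 2 ≤ ∑ k, ‖a k - u k‖ ^ 2 := by
    rw [this]
    have : (0 : ℝ) ≤ ∑ k, ‖d k‖ ^ 2 :=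
      Finset.sum_nonneg fun k _ => sq_nonneg _
    linarith
  calc ∑ k, ‖a k - (a k - P k)‖ ^ 2 = ∑ k, ‖P k‖ ^ 2 :=
        Finset.sum_congr rfl fun k _ => by rw [_root_.sub_sub_cancel]
    _ ≤ ∑ k, ‖a k - u k‖ ^ 2 := hle
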